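/- Let E = Z_3 × Z_3 = S × C₁ with S = ⟨s⟩ and C₁ = ⟨c₁⟩, and let A be an S-ring over E such that C₁ is an A-subgroup and c₁ and c₁² lie in distinct basic sets (both singletons {c₁}, {c₁²} are basic). Then, up to a Cayley isomorphism fixing C₁, the partition of E\{e} into basic sets is one of exactly four possibilities: (1) {c₁},{c₁²},{s,sc₁,sc₁²,s²,s²c₁,s²c₁²}; (2) all eight singletons; (3) {c₁},{c₁²},{s,sc₁,sc₁²},{s²,s²c₁,s²c₁²}; (4) {c₁},{c₁²},{s,s²},{sc₁,s²c₁},{sc₁²,s²c₁²}. -/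

import Mathlib

open scoped BigOperators Pointwise Classical

noncomputable section

/-- The group-ring element `X̄ = Σ_{x∈X} x` in `ℤG`. -/
def ind {G : Type*} [Group G] (X : Finset G) : MonoidAlgebra ℤ G :=
  ∑ x ∈ X, MonoidAlgebra.single x 1

/-- The ℤ-span of the class sums of the members of `S`. -/
def spanA {G : Type*} [Group G] (S : Finset (Finset G)) :
    Submodule ℤ (MonoidAlgebra ℤ G) :=
  Submodule.span ℤ (ind '' (S : Set (Finset G)))

/-- `S` is the partition of basic sets of an S-ring over `G`. -/
structure IsSRing {G : Type*} [Group G] (S : Finset (Finset G)) : Prop where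
  cover : ∀ g : G, ∃ X ∈ S, g ∈ X
  disj : ∀ X ∈ S, ∀ Y ∈ S, X ≠ Y → Disjoint X Y
  nonempty : ∀ X ∈ S, X.Nonempty
  one_mem : ({1} : Finset G) ∈ S
  inv_mem : ∀ X ∈ S, X.image (·⁻¹) ∈ S
  mul_closed : ∀ a ∈ spanA S, ∀ b ∈ spanA S, a * b ∈ spanA S

/-- `X` is an `A`-set: its class sum lies in the span of the basic class sums. -/
def IsASet {G : Type*} [Group G] (S : Finset (Finset G)) (X : Finset G) : Prop :=
  ind X ∈ spanA S

/-- The finset underlying a subgroup of a finite group. -/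
def subgroupFinset {G : Type*} [Group G] [Fintype G] (H : Subgroup G) : Finset G :=
  Finset.univ.filter (· ∈ H)

/-- `H` is an `A`-subgroup. -/
def IsASubgroup {G : Type*} [Group G] [Fintype G] (S : Finset (Finset G))
    (H : Subgroup G) : Prop :=
  IsASet S (subgroupFinset H)

/-- The radical `rad(X) = {g : gX = Xg = X}` as a subgroup. -/
def radSubgroup {G : Type*} [Group G] (X : Finset G) : Subgroup G where
  carrier := {g : G | X.image (g * ·) = X ∧ X.image (· * g) = X}
  one_mem' := by
    constructor <;> · simp only [one_mul, mul_one]; exact Finset.image_id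
  mul_mem' := by
    rintro a b ⟨ha1, ha2⟩ ⟨hb1, hb2⟩
    constructor
    · have : X.image (a * b * ·) = (X.image (b * ·)).image (a * ·) := by
        rw [Finset.image_image]
        exact Finset.image_congr (fun x _ => by simp [mul_assoc])
      rw [this, hb1, ha1]
    · have : X.image (· * (a * b)) = (X.image (· * a)).image (· * b) := by
        rw [Finset.image_image]
        exact Finset.image_congr (fun x _ => by simp [mul_assoc])
      rw [this, ha2, hb2]
  inv_mem' := by
    rintro a ⟨ha1, ha2⟩
    constructor
    · have := congrArg (Finset.image (a⁻¹ * ·)) ha1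
      rw [Finset.image_image] at this
      have h2 : X.image ((a⁻¹ * ·) ∘ (a * ·)) = X := by
        rw [show ((a⁻¹ * ·) ∘ (a * ·)) = id by funext x; simp, Finset.image_id]
      rw [← this, h2]
    · have := congrArg (Finset.image (· * a⁻¹)) ha2
      rw [Finset.image_image] at this
      have h2 : X.image ((· * a⁻¹) ∘ (· * a)) = X := by
        rw [show ((· * a⁻¹) ∘ (· * a)) = id by funext x; simp, Finset.image_id]
      rw [← this, h2]

end

/-- The group `E = ℤ₃ × ℤ₃ = S × C₁` (written multiplicatively). -/
abbrev Egrp := Multiplicative (ZMod 3) × Multiplicative (ZMod 3)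

/-- The generator `s` of the factor `S`. -/
def sEl : Egrp := (Multiplicative.ofAdd (1 : ZMod 3), 1)

/-- The generator `c₁` of the factor `C₁`. -/
def cEl : Egrp := (1, Multiplicative.ofAdd (1 : ZMod 3))

/-- Possible partition (1). -/
def P1 : Finset (Finset Egrp) :=
  { {1}, {cEl}, {cEl ^ 2},
    {sEl, sEl * cEl, sEl * cEl ^ 2, sEl ^ 2, sEl ^ 2 * cEl, sEl ^ 2 * cEl ^ 2} }

/-- Possible partition (2): all singletons. -/
def P2 : Finset (Finset Egrp) :=
  { {1}, {cEl}, {cEl ^ 2}, {sEl}, {sEl ^ 2}, {sEl * cEl}, {sEl ^ 2 * cEl},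
    {sEl * cEl ^ 2}, {sEl ^ 2 * cEl ^ 2} }

/-- Possible partition (3). -/
def P3 : Finset (Finset Egrp) :=
  { {1}, {cEl}, {cEl ^ 2}, {sEl, sEl * cEl, sEl * cEl ^ 2},
    {sEl ^ 2, sEl ^ 2 * cEl, sEl ^ 2 * cEl ^ 2} }

/-- Possible partition (4). -/
def P4 : Finset (Finset Egrp) :=
  { {1}, {cEl}, {cEl ^ 2}, {sEl, sEl ^ 2}, {sEl * cEl, sEl ^ 2 * cEl},
    {sEl * cEl ^ 2, sEl ^ 2 * cEl ^ 2} }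


/-! ### Auxiliary material for the proof -/

section SRingAux

variable {G : Type*} [Group G]

lemma ind_apply' (X : Finset G) (g : G) : (ind X).coeff g = if g ∈ X then 1 else 0 := by
  classical
  rw [ind, MonoidAlgebra.coeff_sum, Finsupp.finset_sum_apply]
  simp [MonoidAlgebra.coeff_single, Finsupp.single_apply, Finset.sum_ite_eq]

lemma span_coeff_congr (S : Finset (Finset G)) {a : MonoidAlgebra ℤ G} (ha : a ∈ spanA S)
    {g g' : G} (h : ∀ Z ∈ S, g ∈ Z ↔ g' ∈ Z) : a.coeff g = a.coeff g' := by
  induction ha using Submodule.span_induction with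
  | mem x hx =>
    obtain ⟨X, hX, rfl⟩ := hx
    rw [ind_apply', ind_apply']
    by_cases hg : g ∈ X
    · simp [hg, (h X hX).1 hg]
    · have hg' : g' ∉ X := fun hg' => hg ((h X hX).2 hg')
      simp [hg, hg']
  | zero => simp
  | add x y hx hy ihx ihy =>
    show (x + y).coeff g = (x + y).coeff g'
    rw [MonoidAlgebra.coeff_add, Finsupp.add_apply, Finsupp.add_apply, ihx, ihy]
  | smul r x hx ih =>
    show (r • x).coeff g = (r • x).coeff g'
    rw [MonoidAlgebra.coeff_smul_apply, MonoidAlgebra.coeff_smul_apply, ih]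

variable (S : Finset (Finset G))

/-- If `Y` is an A-set and a basic set `X` meets `Y`, then `X ⊆ Y`. -/
lemma basic_subset_of_ASet {Y : Finset G} (hY : ind Y ∈ spanA S)
    (hdisj : ∀ X ∈ S, ∀ Z ∈ S, X ≠ Z → Disjoint X Z)
    {X : Finset G} (hX : X ∈ S) {g : G} (hg : g ∈ X) (hgY : g ∈ Y) : X ⊆ Y := by
  intro g' hg'
  have key : (ind Y).coeff g = (ind Y).coeff g' := by
    refine span_coeff_congr S hY (fun Z hZ => ?_)
    constructor
    · intro hgZ
      have : Z = X := by
        by_contra hne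
        exact (Finset.disjoint_left.1 (hdisj Z hZ X hX hne)) hgZ hg
      exact this ▸ hg'
    · intro hg'Z
      have : Z = X := by
        by_contra hne
        exact (Finset.disjoint_left.1 (hdisj Z hZ X hX hne)) hg'Z hg'
      exact this ▸ hg
  rw [ind_apply', ind_apply', if_pos hgY] at key
  by_contra hne
  rw [if_neg hne] at key
  exact one_ne_zero key

lemma ind_mem_spanA {X : Finset G} (hX : X ∈ S) : ind X ∈ spanA S :=
  Submodule.subset_span ⟨X, hX, rfl⟩

lemma ind_mul_single (X : Finset G) (c : G) :
    ind X * MonoidAlgebra.single c 1 = ind (X.image (· * c)) := by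
  classical
  rw [ind, ind, Finset.sum_mul, Finset.sum_image (fun a _ b _ h => mul_right_cancel h)]
  exact Finset.sum_congr rfl (fun x _ => by
    rw [MonoidAlgebra.single_mul_single, mul_one])

lemma ind_singleton (c : G) : ind ({c} : Finset G) = MonoidAlgebra.single c 1 := by
  simp [ind]

lemma image_mul_ASet (hmul : ∀ a ∈ spanA S, ∀ b ∈ spanA S, a * b ∈ spanA S)
    {X : Finset G} (hX : ind X ∈ spanA S) {c : G} (hc : ({c} : Finset G) ∈ S) :
    ind (X.image (· * c)) ∈ spanA S := by
  rw [← ind_mul_single]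
  exact hmul _ hX _ (ind_singleton (G := G) c ▸ ind_mem_spanA S hc)

/-- Closure of the basic-set partition under right translation by a basic
singleton `c` of order dividing 3 (with `{c^2}` also basic). -/
lemma image_mul_mem
    (hcov : ∀ g : G, ∃ X ∈ S, g ∈ X)
    (hdisj : ∀ X ∈ S, ∀ Z ∈ S, X ≠ Z → Disjoint X Z)
    (hne : ∀ X ∈ S, X.Nonempty)
    (hmul : ∀ a ∈ spanA S, ∀ b ∈ spanA S, a * b ∈ spanA S)
    {c : G} (h3 : c ^ 3 = 1) (hcm : ({c} : Finset G) ∈ S)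
    (hc2 : ({c ^ 2} : Finset G) ∈ S)
    {X : Finset G} (hX : X ∈ S) : X.image (· * c) ∈ S := by
  obtain ⟨x, hx⟩ := hne X hX
  obtain ⟨Y, hY, hxY⟩ := hcov (x * c)
  have hXc : ind (X.image (· * c)) ∈ spanA S := image_mul_ASet S hmul (ind_mem_spanA S hX) hcm
  have hYsub : Y ⊆ X.image (· * c) :=
    basic_subset_of_ASet S hXc hdisj hY hxY (Finset.mem_image_of_mem _ hx)
  have hYc2 : ind (Y.image (· * c ^ 2)) ∈ spanA S :=
    image_mul_ASet S hmul (ind_mem_spanA S hY) hc2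
  have hxY2 : x ∈ Y.image (· * c ^ 2) := by
    have : x * c * c ^ 2 = x := by
      rw [mul_assoc, ← pow_succ', h3, mul_one]
    exact this ▸ Finset.mem_image_of_mem _ hxY
  have hXsub : X ⊆ Y.image (· * c ^ 2) :=
    basic_subset_of_ASet S hYc2 hdisj hX hx hxY2
  have hY2sub : Y.image (· * c ^ 2) ⊆ X := by
    intro z hz
    obtain ⟨y, hy, rfl⟩ := Finset.mem_image.1 hz
    obtain ⟨w, hw, rfl⟩ := Finset.mem_image.1 (hYsub hy)
    have : w * c * c ^ 2 = w := by rw [mul_assoc, ← pow_succ', h3, mul_one]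
    rwa [this]
  have hXeq : X = Y.image (· * c ^ 2) := Finset.Subset.antisymm hXsub hY2sub
  have hcard : (X.image (· * c)).card = Y.card := by
    rw [Finset.card_image_of_injective _ (fun a b h => mul_right_cancel h), hXeq,
      Finset.card_image_of_injective _ (fun a b h => mul_right_cancel h)]
  have : X.image (· * c) = Y :=
    (Finset.eq_of_subset_of_card_le hYsub (le_of_eq hcard)).symm
  rwa [this]

end SRingAux

lemma image_instance_irrel {α β : Type*} (i₁ i₂ : DecidableEq β) (f : α → β)
    (s : Finset α) : @Finset.image α β i₁ f s = @Finset.image α β i₂ f s := by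
  cases Subsingleton.elim i₁ i₂
  rfl

/-- Extra partition: Cayley-isomorphic copy of `P4`. -/
def Q1 : Finset (Finset Egrp) :=
  { {1}, {cEl}, {cEl ^ 2}, {sEl, sEl ^ 2 * cEl}, {sEl * cEl, sEl ^ 2 * cEl ^ 2},
    {sEl * cEl ^ 2, sEl ^ 2} }

/-- Extra partition: Cayley-isomorphic copy of `P4`. -/
def Q2 : Finset (Finset Egrp) :=
  { {1}, {cEl}, {cEl ^ 2}, {sEl, sEl ^ 2 * cEl ^ 2}, {sEl * cEl, sEl ^ 2},
    {sEl * cEl ^ 2, sEl ^ 2 * cEl} }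

/-- The partition generated from a single block `B`. -/
def genS (B : Finset Egrp) : Finset (Finset Egrp) :=
  { {1}, {cEl}, {cEl ^ 2}, B, B.image (· * cEl), (B.image (· * cEl)).image (· * cEl),
    B.image (·⁻¹), (B.image (·⁻¹)).image (· * cEl),
    ((B.image (·⁻¹)).image (· * cEl)).image (· * cEl) }

/-- The six non-`C₁` elements of `E`. -/
def Tset : Finset Egrp :=
  {sEl, sEl * cEl, sEl * cEl ^ 2, sEl ^ 2, sEl ^ 2 * cEl, sEl ^ 2 * cEl ^ 2}

set_option maxRecDepth 100000 in
set_option synthInstance.maxHeartbeats 1000000 in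
set_option synthInstance.maxSize 2000 in
set_option maxHeartbeats 4000000 in
lemma classify : ∀ B ∈ Tset.powerset, sEl ∉ B ∨
    ¬(B.image (· * cEl) = B ∨ B.image (· * cEl) ∩ B = ∅) ∨
    (genS B = P1 ∨ genS B = P2 ∨ genS B = P3 ∨ genS B = P4 ∨
     genS B = Q1 ∨ genS B = Q2) := by decide

/-- The map `(x, y) ↦ (x, kx + y)` (written additively). -/
def autFun (k : ZMod 3) (p : Egrp) : Egrp :=
  (p.1, Multiplicative.ofAdd (k * p.1.toAdd + p.2.toAdd))

lemma autFun_left : ∀ (k : ZMod 3) (p : Egrp), autFun (-k) (autFun k p) = p := by decide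

lemma autFun_right : ∀ (k : ZMod 3) (p : Egrp), autFun k (autFun (-k) p) = p := by decide

lemma autFun_mul : ∀ (k : ZMod 3) (p q : Egrp),
    autFun k (p * q) = autFun k p * autFun k q := by decide

/-- The automorphism `(x, y) ↦ (x, kx + y)` (written additively). -/
def autK (k : ZMod 3) : Egrp ≃* Egrp where
  toFun := autFun k
  invFun := autFun (-k)
  left_inv := autFun_left k
  right_inv := autFun_right k
  map_mul' := autFun_mul k

lemma autK_c : ∀ k : ZMod 3, autK k cEl = cEl := by decide

lemma image_zpowers_eq {f : Egrp ≃* Egrp} (hf : f cEl = cEl) :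
    (f : Egrp → Egrp) '' (Subgroup.zpowers cEl : Set Egrp) =
      (Subgroup.zpowers cEl : Set Egrp) := by
  have hfix : ∀ x ∈ (Subgroup.zpowers cEl : Set Egrp), f x = x := by
    rintro x ⟨n, rfl⟩
    show f (cEl ^ n) = cEl ^ n
    rw [map_zpow, hf]
  ext y
  constructor
  · rintro ⟨x, hx, rfl⟩
    rwa [hfix x hx]
  · intro hy
    exact ⟨y, hy, hfix y hy⟩

set_option maxRecDepth 100000 in
set_option maxHeartbeats 1000000 in
lemma q1_image : Q1.image (Finset.image (autK 2)) = P4 := by decide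

set_option maxRecDepth 100000 in
set_option maxHeartbeats 1000000 in
lemma q2_image : Q2.image (Finset.image (autK 1)) = P4 := by decide

lemma refl_image (W : Finset (Finset Egrp)) :
    W.image (Finset.image (MulEquiv.refl Egrp)) = W := by
  have : ∀ X : Finset Egrp, X.image (MulEquiv.refl Egrp) = X := by
    intro X
    rw [show ((MulEquiv.refl Egrp : Egrp ≃* Egrp) : Egrp → Egrp) = id by rfl]
    exact Finset.image_id
  calc W.image (Finset.image (MulEquiv.refl Egrp)) = W.image id :=
        Finset.image_congr (fun X _ => this X)
    _ = W := Finset.image_id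


/-- if `A` is an S-ring over `E = ℤ₃ × ℤ₃` such that `C₁` is an
`A`-subgroup and `{c₁}`, `{c₁²}` are basic sets, then up to a Cayley
isomorphism fixing `C₁` setwise, the basic-set partition is one of the four
listed possibilities. -/
theorem stmt19 (S : Finset (Finset Egrp)) (hS : IsSRing S)
    (hC1 : IsASubgroup S (Subgroup.zpowers cEl))
    (hc : ({cEl} : Finset Egrp) ∈ S) (hc2 : ({cEl ^ 2} : Finset Egrp) ∈ S) :
    ∃ f : Egrp ≃* Egrp,
      (f : Egrp → Egrp) '' (Subgroup.zpowers cEl : Set Egrp) =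
        (Subgroup.zpowers cEl : Set Egrp) ∧
      (S.image (Finset.image f) = P1 ∨ S.image (Finset.image f) = P2 ∨
       S.image (Finset.image f) = P3 ∨ S.image (Finset.image f) = P4) := by
  have h3 : cEl ^ 3 = 1 := by decide
  obtain ⟨B, hB, hsB⟩ := hS.cover sEl
  have himg : ∀ X ∈ S, X.image (· * cEl) ∈ S := by
    intro X hX
    have h := image_mul_mem S hS.cover hS.disj hS.nonempty hS.mul_closed h3 hc hc2 hX
    rwa [image_instance_irrel _ _] at h
  have hBc : B.image (· * cEl) ∈ S := himg B hB
  have hBcc : (B.image (· * cEl)).image (· * cEl) ∈ S := himg _ hBc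
  have hBi : B.image (·⁻¹) ∈ S := by
    have h := hS.inv_mem B hB
    rwa [image_instance_irrel _ _] at h
  have hBic : (B.image (·⁻¹)).image (· * cEl) ∈ S := himg _ hBi
  have hBicc : ((B.image (·⁻¹)).image (· * cEl)).image (· * cEl) ∈ S := himg _ hBic
  have hgen_sub : ∀ X ∈ genS B, X ∈ S := by
    intro X hX
    simp only [genS, Finset.mem_insert, Finset.mem_singleton] at hX
    rcases hX with rfl | rfl | rfl | rfl | rfl | rfl | rfl | rfl | rfl
    · exact hS.one_mem
    · exact hc
    · exact hc2
    · exact hB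
    · exact hBc
    · exact hBcc
    · exact hBi
    · exact hBic
    · exact hBicc
  have huniq : ∀ X ∈ S, ∀ M ∈ S, ∀ g : Egrp, g ∈ X → g ∈ M → X = M := by
    intro X hX M hM g hgX hgM
    by_contra hne
    exact Finset.disjoint_left.1 (hS.disj X hX M hM hne) hgX hgM
  have h9 : ∀ g : Egrp, g = 1 ∨ g = cEl ∨ g = cEl ^ 2 ∨ g = sEl ∨ g = sEl * cEl ∨
      g = (sEl * cEl) * cEl ∨ g = sEl⁻¹ ∨ g = sEl⁻¹ * cEl ∨ g = (sEl⁻¹ * cEl) * cEl := by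
    decide
  have hmem_gen : ∀ M : Finset Egrp, M = ({1} : Finset Egrp) ∨ M = {cEl} ∨ M = {cEl ^ 2} ∨
      M = B ∨ M = B.image (· * cEl) ∨ M = (B.image (· * cEl)).image (· * cEl) ∨
      M = B.image (·⁻¹) ∨ M = (B.image (·⁻¹)).image (· * cEl) ∨
      M = ((B.image (·⁻¹)).image (· * cEl)).image (· * cEl) → M ∈ genS B := by
    intro M hM
    simp only [genS, Finset.mem_insert, Finset.mem_singleton]
    exact hM
  have hS_eq : S = genS B := by
    apply Finset.Subset.antisymm
    · intro X hX
      obtain ⟨x, hx⟩ := hS.nonempty X hX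
      rcases h9 x with rfl | rfl | rfl | rfl | rfl | rfl | rfl | rfl | rfl
      · exact hmem_gen X (Or.inl (huniq X hX _ hS.one_mem _ hx (Finset.mem_singleton_self 1)))
      · exact hmem_gen X (Or.inr (Or.inl
          (huniq X hX _ hc _ hx (Finset.mem_singleton_self cEl))))
      · exact hmem_gen X (Or.inr (Or.inr (Or.inl
          (huniq X hX _ hc2 _ hx (Finset.mem_singleton_self _)))))
      · exact hmem_gen X (Or.inr (Or.inr (Or.inr (Or.inl
          (huniq X hX _ hB _ hx hsB)))))
      · exact hmem_gen X (Or.inr (Or.inr (Or.inr (Or.inr (Or.inl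
          (huniq X hX _ hBc _ hx (Finset.mem_image_of_mem _ hsB)))))))
      · exact hmem_gen X (Or.inr (Or.inr (Or.inr (Or.inr (Or.inr (Or.inl
          (huniq X hX _ hBcc _ hx
            (Finset.mem_image_of_mem _ (Finset.mem_image_of_mem _ hsB)))))))))
      · exact hmem_gen X (Or.inr (Or.inr (Or.inr (Or.inr (Or.inr (Or.inr (Or.inl
          (huniq X hX _ hBi _ hx (Finset.mem_image_of_mem _ hsB)))))))))
      · exact hmem_gen X (Or.inr (Or.inr (Or.inr (Or.inr (Or.inr (Or.inr (Or.inr (Or.inl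
          (huniq X hX _ hBic _ hx
            (Finset.mem_image_of_mem _ (Finset.mem_image_of_mem _ hsB)))))))))))
      · exact hmem_gen X (Or.inr (Or.inr (Or.inr (Or.inr (Or.inr (Or.inr (Or.inr (Or.inr
          (huniq X hX _ hBicc _ hx
            (Finset.mem_image_of_mem _
              (Finset.mem_image_of_mem _ (Finset.mem_image_of_mem _ hsB))))))))))))
    · exact hgen_sub
  have hBT : B ∈ Tset.powerset := by
    rw [Finset.mem_powerset]
    intro g hg
    rcases h9 g with rfl | rfl | rfl | rfl | rfl | rfl | rfl | rfl | rfl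
    · have : B = {1} := huniq B hB _ hS.one_mem _ hg (Finset.mem_singleton_self 1)
      rw [this] at hsB
      exact absurd (Finset.mem_singleton.1 hsB) (by decide)
    · have : B = {cEl} := huniq B hB _ hc _ hg (Finset.mem_singleton_self cEl)
      rw [this] at hsB
      exact absurd (Finset.mem_singleton.1 hsB) (by decide)
    · have : B = {cEl ^ 2} := huniq B hB _ hc2 _ hg (Finset.mem_singleton_self _)
      rw [this] at hsB
      exact absurd (Finset.mem_singleton.1 hsB) (by decide)
    · exact (by decide : sEl ∈ Tset)
    · exact (by decide : sEl * cEl ∈ Tset)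
    · exact (by decide : (sEl * cEl) * cEl ∈ Tset)
    · exact (by decide : sEl⁻¹ ∈ Tset)
    · exact (by decide : sEl⁻¹ * cEl ∈ Tset)
    · exact (by decide : (sEl⁻¹ * cEl) * cEl ∈ Tset)
  have hcond : B.image (· * cEl) = B ∨ B.image (· * cEl) ∩ B = ∅ := by
    by_cases h : B.image (· * cEl) = B
    · exact Or.inl h
    · exact Or.inr (Finset.disjoint_iff_inter_eq_empty.1 (hS.disj _ hBc _ hB h))
  rcases classify B hBT with hns | hcond' | hres
  · exact absurd hsB hns
  · exact absurd hcond hcond'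
  rcases hres with h | h | h | h | h | h
  · exact ⟨MulEquiv.refl Egrp, image_zpowers_eq rfl,
      Or.inl (by rw [hS_eq, h, refl_image])⟩
  · exact ⟨MulEquiv.refl Egrp, image_zpowers_eq rfl,
      Or.inr (Or.inl (by rw [hS_eq, h, refl_image]))⟩
  · exact ⟨MulEquiv.refl Egrp, image_zpowers_eq rfl,
      Or.inr (Or.inr (Or.inl (by rw [hS_eq, h, refl_image])))⟩
  · exact ⟨MulEquiv.refl Egrp, image_zpowers_eq rfl,
      Or.inr (Or.inr (Or.inr (by rw [hS_eq, h, refl_image])))⟩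
  · exact ⟨autK 2, image_zpowers_eq (autK_c 2),
      Or.inr (Or.inr (Or.inr (by rw [hS_eq, h, q1_image])))⟩
  · exact ⟨autK 1, image_zpowers_eq (autK_c 1),
      Or.inr (Or.inr (Or.inr (by rw [hS_eq, h, q2_image])))⟩
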